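/- arXiv:2304.04031 — 2 statements merged into one kernel-verified Lean document; each statement's English description precedes it below -/
import Mathlib

section
/- The second moment functional is maximized at zero at high temperature: Let Q ∈ ℝ^{n×n} be symmetric positive definite and β ∈ HT(Q). Then for every A ∈ ℝ^{n×n} such that the 2n×2n block matrix [[Q, A],[A^T, Q]] is positive definite, V(A) ≤ V(0), where V(A) = β^T A^{⊙2} β + (1/2) log det [[Q, A],[A^T, Q]] and A^{⊙2} denotes the entrywise square of A. -/
noncomputable section

open MeasureTheory ProbabilityTheory Filter Matrix Real
open scoped BigOperators ENNReal NNReal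

/-- The law of the disorder: i.i.d. standard Gaussian entries `J i j`. -/
def disorder (N : ℕ) : Measure (Fin N → Fin N → ℝ) :=
  Measure.pi fun _ => Measure.pi fun _ => gaussianReal 0 1

/-- Euclidean dot product on `Fin N → ℝ`. -/
def dot {N : ℕ} (x y : Fin N → ℝ) : ℝ := ∑ i, x i * y i

/-- The 2-spin SK Hamiltonian `H_N(σ) = √N ∑_{ij} J_{ij} σ_i σ_j`. -/
def ham (N : ℕ) (J : Fin N → Fin N → ℝ) (σ : Fin N → ℝ) : ℝ :=
  Real.sqrt N * ∑ i, ∑ j, J i j * σ i * σ j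

/-- The uniform probability measure on the unit sphere of `ℝ^N`
(the normalized spherical measure obtained from Lebesgue measure on
`EuclideanSpace ℝ (Fin N)`). -/
def sphereUniform (N : ℕ) : Measure (Fin N → ℝ) :=
  Measure.map (fun σ : Metric.sphere (0 : EuclideanSpace ℝ (Fin N)) 1 =>
      EuclideanSpace.equiv (Fin N) ℝ σ.val)
    (((volume : Measure (EuclideanSpace ℝ (Fin N))).toSphere Set.univ)⁻¹ •
      (volume : Measure (EuclideanSpace ℝ (Fin N))).toSphere)

/-- The product of `n` uniform sphere measures: the law of `σ⃗ = (σ^1, …, σ^n)`. -/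
def spheres (n N : ℕ) : Measure (Fin n → Fin N → ℝ) :=
  Measure.pi fun _ => sphereUniform N

/-- The set `Q_ε` of replicas whose overlaps are within `ε` of `Q`. -/
def overlapSet (n N : ℕ) (Q : Matrix (Fin n) (Fin n) ℝ) (ε : ℝ) :
    Set (Fin n → Fin N → ℝ) :=
  {σ | ∀ k l, |dot (σ k) (σ l) - Q k l| ≤ ε}

/-- The free energy `F^ε_N(β, h⃗, Q)`. -/
def freeEnergy (n N : ℕ) (β : Fin n → ℝ) (hvec : Fin n → Fin N → ℝ)
    (Q : Matrix (Fin n) (Fin n) ℝ) (ε : ℝ) (J : Fin N → Fin N → ℝ) : ℝ :=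
  (1 / (N : ℝ)) * Real.log (∫ σ in overlapSet n N Q ε,
      Real.exp (∑ k, (β k * ham N J (σ k) + N * dot (hvec k) (σ k))) ∂ spheres n N)

/-- The partition function without external field, `Z^ε_N(β, 0, Q)`. -/
def partitionZ (n N : ℕ) (β : Fin n → ℝ) (Q : Matrix (Fin n) (Fin n) ℝ)
    (ε : ℝ) (J : Fin N → Fin N → ℝ) : ℝ :=
  ∫ σ in overlapSet n N Q ε, Real.exp (∑ k, β k * ham N J (σ k)) ∂ spheres n N

/-- The overlap matrix `m⃗ m⃗ᵀ`. -/
def overlap {n N : ℕ} (m : Fin n → Fin N → ℝ) : Matrix (Fin n) (Fin n) ℝ :=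
  Matrix.of fun k l => dot (m k) (m l)

/-- `βᵀ A^{⊙2} β`, the quadratic form of the entrywise square of `A`. -/
def quadSq {n : ℕ} (β : Fin n → ℝ) (A : Matrix (Fin n) (Fin n) ℝ) : ℝ :=
  ∑ k, ∑ l, β k * β l * (A k l) ^ 2

/-- The TAP free energy `F_TAP(m⃗)`. -/
def FTAP (n N : ℕ) (β : Fin n → ℝ) (hvec : Fin n → Fin N → ℝ)
    (Q : Matrix (Fin n) (Fin n) ℝ) (J : Fin N → Fin N → ℝ)
    (m : Fin n → Fin N → ℝ) : ℝ :=
  ((N : ℝ) / 2) * Real.log (Q - overlap m).det + ∑ k, β k * ham N J (m k)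
    + N * ∑ k, dot (hvec k) (m k) + ((N : ℝ) / 2) * quadSq β (Q - overlap m)

/-- The spectral norm (operator norm with respect to Euclidean norms). -/
def matSpectralNorm {n : ℕ} (A : Matrix (Fin n) (Fin n) ℝ) : ℝ :=
  ‖LinearMap.toContinuousLinearMap (Matrix.toEuclideanLin A)‖

/-- The Frobenius norm of a matrix. -/
def frob {n : ℕ} (A : Matrix (Fin n) (Fin n) ℝ) : ℝ :=
  Real.sqrt (∑ k, ∑ l, (A k l) ^ 2)

/-- `𝛃^{1/2}`: the diagonal matrix with entries `√(β_k)` (the positive semidefinite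
square root of `diag β` for `β ≥ 0`). -/
def sqrtDiag {n : ℕ} (β : Fin n → ℝ) : Matrix (Fin n) (Fin n) ℝ :=
  Matrix.diagonal fun k => Real.sqrt (β k)

/-- `𝛃^{-1/2}`: the diagonal matrix with entries `(√(β_k))⁻¹`. -/
def invSqrtDiag {n : ℕ} (β : Fin n → ℝ) : Matrix (Fin n) (Fin n) ℝ :=
  Matrix.diagonal fun k => (Real.sqrt (β k))⁻¹

/-- The Plefka set `Plef_n(Q, β)` of `n × n` constraint matrices: entries in `[-1,1]`,
`0 ≤ Q̃ < Q` in the Loewner order, and `‖𝛃^{1/2}(Q - Q̃)𝛃^{1/2}‖₂ ≤ 1/√2`. -/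
def plefkaMat (n : ℕ) (Q : Matrix (Fin n) (Fin n) ℝ) (β : Fin n → ℝ) :
    Set (Matrix (Fin n) (Fin n) ℝ) :=
  {Qt | (∀ k l, |Qt k l| ≤ 1) ∧ Qt.PosSemidef ∧ (Q - Qt).PosDef ∧
    matSpectralNorm (sqrtDiag β * (Q - Qt) * sqrtDiag β) ≤ 1 / Real.sqrt 2}

/-- The Plefka set `Plef_N(Q, β)` of magnetization vectors. -/
def plefkaMag (n N : ℕ) (Q : Matrix (Fin n) (Fin n) ℝ) (β : Fin n → ℝ) :
    Set (Fin n → Fin N → ℝ) :=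
  {m | overlap m ∈ plefkaMat n Q β}

open scoped Classical in
/-- The positive semidefinite square root of a positive semidefinite matrix
(junk value `0` off the positive semidefinite matrices). -/
def msqrt {n : ℕ} (A : Matrix (Fin n) (Fin n) ℝ) : Matrix (Fin n) (Fin n) ℝ :=
  if h : A.PosSemidef then (h.1.eigenvectorUnitary : Matrix (Fin n) (Fin n) ℝ) *
      Matrix.diagonal (fun i => Real.sqrt (h.1.eigenvalues i)) *
      (star h.1.eigenvectorUnitary : Matrix (Fin n) (Fin n) ℝ) else 0

/-- The ground state energy functional `GSE(β, h, Q̃)`. -/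
def GSE (n : ℕ) (β h : Fin n → ℝ) (Qt : Matrix (Fin n) (Fin n) ℝ) : ℝ :=
  Real.sqrt 2 * Matrix.trace (msqrt
    (msqrt ((1 / 2 : ℝ) • Matrix.vecMulVec h h
        + Matrix.diagonal β * Qt * Matrix.diagonal β) * Qt *
      msqrt ((1 / 2 : ℝ) • Matrix.vecMulVec h h
        + Matrix.diagonal β * Qt * Matrix.diagonal β)))

/-- The high temperature region `HT(Q)`. -/
def HTset (n : ℕ) (Q : Matrix (Fin n) (Fin n) ℝ) : Set (Fin n → ℝ) :=
  {β | (∀ k, 0 ≤ β k) ∧ matSpectralNorm (sqrtDiag β * Q * sqrtDiag β) ≤ 1 / Real.sqrt 2}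

/-- The second moment functional `V(A)`. -/
def secondMomentV (n : ℕ) (Q : Matrix (Fin n) (Fin n) ℝ) (β : Fin n → ℝ)
    (A : Matrix (Fin n) (Fin n) ℝ) : ℝ :=
  quadSq β A + (1 / 2) * Real.log (Matrix.fromBlocks Q A Aᵀ Q).det

/-- The effective constraint matrix `Q̂(m⃗)`. -/
def Qhat {n N : ℕ} (Q : Matrix (Fin n) (Fin n) ℝ) (m : Fin n → Fin N → ℝ) :
    Matrix (Fin n) (Fin n) ℝ :=
  Matrix.of fun k l => (Q k l - dot (m k) (m l)) /
    (Real.sqrt (1 - dot (m k) (m k)) * Real.sqrt (1 - dot (m l) (m l)))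

/-- A vector of `ℝ^d` viewed in `ℝ^N` via a linear isometric embedding of
Euclidean spaces (whose range is a subspace of dimension `d`). -/
def emb {d N : ℕ} (φ : EuclideanSpace ℝ (Fin d) →ₗᵢ[ℝ] EuclideanSpace ℝ (Fin N))
    (x : Fin d → ℝ) : Fin N → ℝ :=
  EuclideanSpace.equiv (Fin N) ℝ (φ ((EuclideanSpace.equiv (Fin d) ℝ).symm x))


open scoped Matrix.Norms.L2Operator

open scoped MatrixOrder in
def Matrix.PosSemidef.sqrt {m : ℕ} {P : Matrix (Fin m) (Fin m) ℝ} (_hP : P.PosSemidef) :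
    Matrix (Fin m) (Fin m) ℝ :=
  CFC.sqrt P

open scoped MatrixOrder in
lemma Matrix.PosSemidef.sqrt_mul_self {m : ℕ} {P : Matrix (Fin m) (Fin m) ℝ}
    (hP : P.PosSemidef) : hP.sqrt * hP.sqrt = P :=
  CFC.sqrt_mul_sqrt_self P hP.nonneg

open scoped MatrixOrder in
lemma Matrix.PosSemidef.posSemidef_sqrt {m : ℕ} {P : Matrix (Fin m) (Fin m) ℝ}
    (hP : P.PosSemidef) : hP.sqrt.PosSemidef :=
  (CFC.sqrt_nonneg P).posSemidef

lemma spectralNorm_eq_norm {m : ℕ} (A : Matrix (Fin m) (Fin m) ℝ) : matSpectralNorm A = ‖A‖ := rfl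

lemma aux_trace_nonneg {m : ℕ} {M : Matrix (Fin m) (Fin m) ℝ} (hM : M.PosSemidef) :
    0 ≤ M.trace := by
  rw [Matrix.trace]
  refine Finset.sum_nonneg fun i _ => ?_
  exact hM.diag_nonneg

lemma aux_trace_mul_nonneg {m : ℕ} {P R : Matrix (Fin m) (Fin m) ℝ}
    (hP : P.PosSemidef) (hR : R.PosSemidef) : 0 ≤ (P * R).trace := by
  have h1 : P * R = hP.sqrt * (hP.sqrt * R) := by
    rw [← Matrix.mul_assoc, hP.sqrt_mul_self]
  have h2 : (P * R).trace = (hP.sqrt * R * hP.sqrt).trace := by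
    rw [h1, Matrix.trace_mul_comm]
  rw [h2]
  have := hR.conjTranspose_mul_mul_same hP.sqrt
  rw [hP.posSemidef_sqrt.1] at this
  exact aux_trace_nonneg this

lemma aux_trace_mono {m : ℕ} {P M M' : Matrix (Fin m) (Fin m) ℝ}
    (hP : P.PosSemidef) (h : (M' - M).PosSemidef) : (P * M).trace ≤ (P * M').trace := by
  have := aux_trace_mul_nonneg hP h
  rw [Matrix.mul_sub, Matrix.trace_sub] at this
  linarith

lemma aux_posDef {m : ℕ} {M : Matrix (Fin m) (Fin m) ℝ} (h : M.PosSemidef)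
    (hd : M.det ≠ 0) : M.PosDef := by
  exact h.posDef_iff_det_ne_zero.mpr hd

lemma aux_trace_eig {m : ℕ} {M : Matrix (Fin m) (Fin m) ℝ} (hM : M.IsHermitian) :
    M.trace = ∑ i, hM.eigenvalues i := by
  conv_lhs => rw [hM.spectral_theorem, Unitary.conjStarAlgAut_apply]
  rw [Matrix.trace_mul_cycle]
  have h1 : star (hM.eigenvectorUnitary : Matrix (Fin m) (Fin m) ℝ) *
      (hM.eigenvectorUnitary : Matrix (Fin m) (Fin m) ℝ) = 1 :=
    Matrix.mem_unitaryGroup_iff'.mp hM.eigenvectorUnitary.2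
  rw [h1, Matrix.one_mul, Matrix.trace_diagonal]
  simp

lemma aux_log_det_le {m : ℕ} {M : Matrix (Fin m) (Fin m) ℝ} (hM : M.PosDef) :
    Real.log M.det ≤ M.trace - m := by
  have hpos : ∀ i, 0 < hM.1.eigenvalues i := hM.eigenvalues_pos
  have hdet : M.det = ∏ i, hM.1.eigenvalues i := by
    simpa using hM.1.det_eq_prod_eigenvalues
  rw [hdet, Real.log_prod (fun i _ => (hpos i).ne'), aux_trace_eig hM.1]
  have h1 : ∀ i ∈ Finset.univ, Real.log (hM.1.eigenvalues i) ≤ hM.1.eigenvalues i - 1 :=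
    fun i _ => Real.log_le_sub_one_of_pos (hpos i)
  calc ∑ i, Real.log (hM.1.eigenvalues i) ≤ ∑ i, (hM.1.eigenvalues i - 1) :=
        Finset.sum_le_sum h1
    _ = (∑ i, hM.1.eigenvalues i) - m := by
        rw [Finset.sum_sub_distrib]
        simp

lemma aux_dot_sub {m : ℕ} {S : Matrix (Fin m) (Fin m) ℝ} (hS : Sᵀ = S)
    (M : Matrix (Fin m) (Fin m) ℝ) (y : Fin m → ℝ) :
    dotProduct (S *ᵥ y) (M *ᵥ (S *ᵥ y)) = dotProduct y ((S * M * S) *ᵥ y) := by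
  rw [Matrix.mulVec_mulVec]
  have h1 : S *ᵥ y = y ᵥ* S := by rw [← hS, Matrix.vecMul_transpose, hS]
  rw [h1, ← dotProduct_mulVec, Matrix.mulVec_mulVec, Matrix.mul_assoc]

lemma aux_quadform {m : ℕ} (M : Matrix (Fin m) (Fin m) ℝ) (c : ℝ) (h : ‖M‖ ≤ c)
    (x : Fin m → ℝ) : dotProduct x (M *ᵥ x) ≤ c * dotProduct x x := by
  set x' : EuclideanSpace ℝ (Fin m) := (WithLp.equiv 2 _).symm x with hx'
  have h1 : dotProduct x (M *ᵥ x)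
      = inner ℝ ((Matrix.toEuclideanCLM (𝕜 := ℝ) M) x') x' := by
    rw [Matrix.toEuclideanCLM_toLp]
    simp only [PiLp.inner_apply, RCLike.inner_apply, starRingEnd_apply, star_trivial,
      WithLp.equiv_symm_apply, WithLp.ofLp_toLp, dotProduct, hx']
  have h2 : dotProduct x x = ‖x'‖ ^ 2 := by
    rw [← real_inner_self_eq_norm_sq]
    simp only [PiLp.inner_apply, RCLike.inner_apply, starRingEnd_apply, star_trivial,
      WithLp.equiv_symm_apply, WithLp.ofLp_toLp, dotProduct, hx']
  rw [h1, h2]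
  calc inner ℝ ((Matrix.toEuclideanCLM (𝕜 := ℝ) M) x') x'
      ≤ ‖(Matrix.toEuclideanCLM (𝕜 := ℝ) M) x'‖ * ‖x'‖ := real_inner_le_norm _ _
    _ ≤ (‖M‖ * ‖x'‖) * ‖x'‖ := by
        have := (Matrix.toEuclideanCLM (𝕜 := ℝ) M).le_opNorm x'
        rw [← Matrix.cstar_norm_def] at this
        exact mul_le_mul_of_nonneg_right this (norm_nonneg _)
    _ ≤ (c * ‖x'‖) * ‖x'‖ := by
        have : ‖M‖ * ‖x'‖ ≤ c * ‖x'‖ := mul_le_mul_of_nonneg_right h (norm_nonneg _)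
        exact mul_le_mul_of_nonneg_right this (norm_nonneg _)
    _ = c * ‖x'‖ ^ 2 := by ring

lemma aux_quadSq_trace {m : ℕ} (β : Fin m → ℝ) (A : Matrix (Fin m) (Fin m) ℝ) :
    quadSq β A = (Aᵀ * Matrix.diagonal β * A * Matrix.diagonal β).trace := by
  simp only [quadSq, Matrix.trace, Matrix.diag, Matrix.mul_apply, Matrix.transpose_apply,
    Matrix.diagonal_apply, mul_ite, ite_mul, mul_zero, zero_mul, Finset.sum_ite_eq,
    Finset.sum_ite_eq', Finset.mem_univ, if_true]
  rw [Finset.sum_comm]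
  refine Finset.sum_congr rfl fun l _ => ?_
  rw [Finset.sum_mul]
  exact Finset.sum_congr rfl fun k _ => by ring


/-- **The second moment functional is maximized at zero at high temperature**
(Proposition 3.6): for positive definite `Q` and `β ∈ HT(Q)`, `V(A) ≤ V(0)` for all
`A` such that the block matrix `[[Q, A], [Aᵀ, Q]]` is positive definite. -/
theorem second_moment_maximized_at_zero (n : ℕ)
    (Q : Matrix (Fin n) (Fin n) ℝ) (hQsym : Q.IsSymm) (hQpd : Q.PosDef)
    (β : Fin n → ℝ) (hβ : β ∈ HTset n Q)
    (A : Matrix (Fin n) (Fin n) ℝ)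
    (hA : (Matrix.fromBlocks Q A Aᵀ Q).PosDef) :
    secondMomentV n Q β A ≤ secondMomentV n Q β 0 := by
  classical
  obtain ⟨hβnn, hβnorm⟩ := hβ
  have hc0 : (0:ℝ) < 1 / Real.sqrt 2 := by positivity
  set c : ℝ := 1 / Real.sqrt 2 with hcdef
  set D : Matrix (Fin n) (Fin n) ℝ := sqrtDiag β with hDdef
  set D2 : Matrix (Fin n) (Fin n) ℝ := Matrix.diagonal β with hD2def
  have hDt : Dᵀ = D := Matrix.diagonal_transpose _
  have hDh : Dᴴ = D := by rw [Matrix.conjTranspose_eq_transpose_of_trivial, hDt]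
  have hDD : D * D = D2 := by
    rw [hDdef, hD2def]
    show Matrix.diagonal _ * Matrix.diagonal _ = _
    rw [Matrix.diagonal_mul_diagonal]
    exact congrArg _ (funext fun k => Real.mul_self_sqrt (hβnn k))
  have hQs : Q.PosSemidef := hQpd.posSemidef
  set S : Matrix (Fin n) (Fin n) ℝ := hQs.sqrt with hSdef
  have hSS : S * S = Q := hQs.sqrt_mul_self
  have hSh : S.IsHermitian := hQs.posSemidef_sqrt.1
  have hSt : Sᵀ = S := by rw [← Matrix.conjTranspose_eq_transpose_of_trivial, hSh.eq]
  have hdetS : S.det ≠ 0 := by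
    intro h0
    have h1 : S.det * S.det = Q.det := by rw [← Matrix.det_mul, hSS]
    rw [h0, mul_zero] at h1
    exact hQpd.det_pos.ne' h1.symm
  have hSu : IsUnit S.det := isUnit_iff_ne_zero.mpr hdetS
  have hSinv : S * S⁻¹ = 1 := Matrix.mul_nonsing_inv S hSu
  have hSinv' : S⁻¹ * S = 1 := Matrix.nonsing_inv_mul S hSu
  have hSinvh : S⁻¹.IsHermitian := hSh.inv
  have hQinveq : Q⁻¹ = S⁻¹ * S⁻¹ := by rw [← hSS, Matrix.mul_inv_rev]
  have hSQS : S * Q⁻¹ * S = 1 := by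
    rw [hQinveq]
    calc S * (S⁻¹ * S⁻¹) * S = (S * S⁻¹) * (S⁻¹ * S) := by simp only [Matrix.mul_assoc]
      _ = 1 := by rw [hSinv, hSinv', Matrix.mul_one]
  have hSQSi : S⁻¹ * Q * S⁻¹ = 1 := by
    rw [← hSS]
    calc S⁻¹ * (S * S) * S⁻¹ = (S⁻¹ * S) * (S * S⁻¹) := by simp only [Matrix.mul_assoc]
      _ = 1 := by rw [hSinv', hSinv, Matrix.mul_one]
  -- spectral norm bound transfer
  have hnormSDS : matSpectralNorm (S * D2 * S) ≤ c := by
    have hXh : (S * D)ᴴ = D * S := by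
      rw [Matrix.conjTranspose_mul, hDh, hSh.eq]
    have h1 : S * D2 * S = (S * D) * (S * D)ᴴ := by
      rw [hXh, ← hDD]
      simp only [Matrix.mul_assoc]
    have h2 : D * Q * D = (S * D)ᴴ * (S * D) := by
      rw [hXh, ← hSS]
      simp only [Matrix.mul_assoc]
    rw [spectralNorm_eq_norm, h1]
    calc ‖(S * D) * (S * D)ᴴ‖ = ‖((S * D)ᴴ)ᴴ * (S * D)ᴴ‖ := by
          rw [Matrix.conjTranspose_conjTranspose]
      _ = ‖(S * D)ᴴ‖ * ‖(S * D)ᴴ‖ := Matrix.l2_opNorm_conjTranspose_mul_self _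
      _ = ‖S * D‖ * ‖S * D‖ := by rw [Matrix.l2_opNorm_conjTranspose]
      _ = ‖(S * D)ᴴ * (S * D)‖ := (Matrix.l2_opNorm_conjTranspose_mul_self _).symm
      _ = ‖D * Q * D‖ := by rw [← h2]
      _ ≤ c := by rw [← spectralNorm_eq_norm]; exact hβnorm
  -- Loewner bound
  have hLoew : ((c • Q⁻¹) - D2).PosSemidef := by
    refine Matrix.PosSemidef.of_dotProduct_mulVec_nonneg ?_ ?_
    · have h1 : (Q⁻¹).IsHermitian := hQpd.1.inv
      have h2 : D2.IsHermitian := Matrix.isHermitian_diagonal β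
      show _ = _
      rw [Matrix.conjTranspose_sub, Matrix.conjTranspose_smul, star_trivial, h1.eq, h2.eq]
    · intro x
      rw [star_trivial]
      have hxy : x = S *ᵥ (S⁻¹ *ᵥ x) := by
        rw [Matrix.mulVec_mulVec, hSinv, Matrix.one_mulVec]
      set y : Fin n → ℝ := S⁻¹ *ᵥ x with hy
      have e1 : dotProduct x (D2 *ᵥ x) = dotProduct y ((S * D2 * S) *ᵥ y) := by
        conv_lhs => rw [hxy]
        exact aux_dot_sub hSt _ _
      have e2 : dotProduct x (Q⁻¹ *ᵥ x) = dotProduct y y := by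
        conv_lhs => rw [hxy]
        rw [aux_dot_sub hSt, hSQS, Matrix.one_mulVec]
      rw [Matrix.sub_mulVec, dotProduct_sub, sub_nonneg, Matrix.smul_mulVec,
        dotProduct_smul, smul_eq_mul, e1, e2]
      exact aux_quadform (S * D2 * S) c (by rw [← spectralNorm_eq_norm]; exact hnormSDS) y
  -- positive semidefinite auxiliary matrices
  have hP1 : (Aᵀ * D2 * A).PosSemidef := by
    have h1 : Aᵀ * D2 * A = (D * A)ᴴ * (D * A) := by
      rw [Matrix.conjTranspose_mul, hDh, Matrix.conjTranspose_eq_transpose_of_trivial, ← hDD]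
      simp only [Matrix.mul_assoc]
    rw [h1]
    exact Matrix.posSemidef_conjTranspose_mul_self _
  have hP2 : (A * Q⁻¹ * Aᵀ).PosSemidef := by
    have h := hQpd.inv.posSemidef.mul_mul_conjTranspose_same A
    rwa [Matrix.conjTranspose_eq_transpose_of_trivial] at h
  have hc2 : c * c = 1 / 2 := by
    rw [hcdef, div_mul_div_comm, one_mul, Real.mul_self_sqrt (by norm_num : (0:ℝ) ≤ 2)]
  set N : Matrix (Fin n) (Fin n) ℝ := Aᵀ * Q⁻¹ * A with hNdef
  -- the key trace inequality
  have key1 : quadSq β A ≤ 1 / 2 * (N * Q⁻¹).trace := by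
    have e1 : (Aᵀ * D2 * A * D2).trace ≤ c * (Aᵀ * D2 * A * Q⁻¹).trace := by
      have h := aux_trace_mono hP1 hLoew
      rwa [Matrix.mul_smul, Matrix.trace_smul, smul_eq_mul] at h
    have e2 : (Aᵀ * D2 * A * Q⁻¹).trace = (A * Q⁻¹ * Aᵀ * D2).trace := by
      calc (Aᵀ * D2 * A * Q⁻¹).trace = (Aᵀ * (D2 * A * Q⁻¹)).trace := by
            simp only [Matrix.mul_assoc]
        _ = ((D2 * A * Q⁻¹) * Aᵀ).trace := Matrix.trace_mul_comm _ _
        _ = (D2 * (A * Q⁻¹ * Aᵀ)).trace := by simp only [Matrix.mul_assoc]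
        _ = (A * Q⁻¹ * Aᵀ * D2).trace := Matrix.trace_mul_comm _ _
    have e3 : (A * Q⁻¹ * Aᵀ * D2).trace ≤ c * (A * Q⁻¹ * Aᵀ * Q⁻¹).trace := by
      have h := aux_trace_mono hP2 hLoew
      rwa [Matrix.mul_smul, Matrix.trace_smul, smul_eq_mul] at h
    have e4 : (A * Q⁻¹ * Aᵀ * Q⁻¹).trace = (N * Q⁻¹).trace := by
      rw [hNdef]
      calc (A * Q⁻¹ * Aᵀ * Q⁻¹).trace = ((A * Q⁻¹) * (Aᵀ * Q⁻¹)).trace := by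
            simp only [Matrix.mul_assoc]
        _ = ((Aᵀ * Q⁻¹) * (A * Q⁻¹)).trace := Matrix.trace_mul_comm _ _
        _ = (Aᵀ * Q⁻¹ * A * Q⁻¹).trace := by simp only [Matrix.mul_assoc]
    rw [aux_quadSq_trace, ← hD2def]
    calc (Aᵀ * D2 * A * D2).trace ≤ c * (A * Q⁻¹ * Aᵀ * D2).trace := by rw [← e2]; exact e1
      _ ≤ c * (c * (A * Q⁻¹ * Aᵀ * Q⁻¹).trace) :=
          mul_le_mul_of_nonneg_left e3 hc0.le
      _ = 1 / 2 * (N * Q⁻¹).trace := by rw [← mul_assoc, hc2, e4]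
  -- block determinant
  haveI : Invertible Q := Q.invertibleOfIsUnitDet hQpd.det_pos.ne'.isUnit
  have hAconj : Aᴴ = Aᵀ := Matrix.conjTranspose_eq_transpose_of_trivial A
  have hblock : (Matrix.fromBlocks Q A Aᵀ Q).det = Q.det * (Q - N).det := by
    rw [Matrix.det_fromBlocks₁₁, Matrix.invOf_eq_nonsing_inv, hNdef]
  have hQNpsd : (Q - N).PosSemidef := by
    have h1 := (Matrix.PosDef.fromBlocks₁₁ A Q hQpd).mp
    rw [hAconj] at h1
    rw [hNdef]
    exact h1 hA.posSemidef
  have hdetQN : 0 < (Q - N).det := by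
    have h1 : 0 < (Matrix.fromBlocks Q A Aᵀ Q).det := hA.det_pos
    rw [hblock] at h1
    by_contra hle
    push_neg at hle
    nlinarith [hQpd.det_pos]
  -- pass to 1 - K
  have hKpsd : ((1 : Matrix (Fin n) (Fin n) ℝ) - S⁻¹ * N * S⁻¹).PosSemidef := by
    have h1 := hQNpsd.conjTranspose_mul_mul_same S⁻¹
    rw [hSinvh.eq] at h1
    have h3 : S⁻¹ * (Q - N) * S⁻¹ = 1 - S⁻¹ * N * S⁻¹ := by
      rw [Matrix.mul_sub, Matrix.sub_mul, hSQSi]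
    rwa [h3] at h1
  have hdetSS : S.det * S.det = Q.det := by rw [← Matrix.det_mul, hSS]
  have hdet1K : (Q - N).det = Q.det * (1 - S⁻¹ * N * S⁻¹).det := by
    have h4 : Q - N = S * (1 - S⁻¹ * N * S⁻¹) * S := by
      rw [Matrix.mul_sub, Matrix.mul_one, Matrix.sub_mul, hSS]
      congr 1
      have h5 : S * (S⁻¹ * N * S⁻¹) * S = N := by
        calc S * (S⁻¹ * N * S⁻¹) * S = (S * S⁻¹) * (N * (S⁻¹ * S)) := by
              simp only [Matrix.mul_assoc]
          _ = N := by rw [hSinv, hSinv', Matrix.one_mul, Matrix.mul_one]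
      exact h5.symm
    rw [h4, Matrix.det_mul, Matrix.det_mul,
      show S.det * (1 - S⁻¹ * N * S⁻¹).det * S.det
        = (S.det * S.det) * (1 - S⁻¹ * N * S⁻¹).det by ring, hdetSS]
  have hdetK : (1 - S⁻¹ * N * S⁻¹).det ≠ 0 := by
    intro h0
    rw [h0, mul_zero] at hdet1K
    exact hdetQN.ne' hdet1K
  have hKpd := aux_posDef hKpsd hdetK
  have hlog := aux_log_det_le hKpd
  have htr1K : ((1 : Matrix (Fin n) (Fin n) ℝ) - S⁻¹ * N * S⁻¹).trace
      = n - (S⁻¹ * N * S⁻¹).trace := by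
    rw [Matrix.trace_sub, Matrix.trace_one]
    simp
  have htrK : (S⁻¹ * N * S⁻¹).trace = (N * Q⁻¹).trace := by
    calc (S⁻¹ * N * S⁻¹).trace = (S⁻¹ * (N * S⁻¹)).trace := by rw [Matrix.mul_assoc]
      _ = ((N * S⁻¹) * S⁻¹).trace := Matrix.trace_mul_comm _ _
      _ = (N * (S⁻¹ * S⁻¹)).trace := by rw [Matrix.mul_assoc]
      _ = (N * Q⁻¹).trace := by rw [← hQinveq]
  have hlog2 : Real.log ((1 - S⁻¹ * N * S⁻¹).det) ≤ -(N * Q⁻¹).trace := by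
    rw [htr1K, htrK] at hlog
    linarith
  -- final assembly
  have hdQ : (0:ℝ) < Q.det := hQpd.det_pos
  have hdK : 0 < (1 - S⁻¹ * N * S⁻¹).det := hKpd.det_pos
  have hq0 : quadSq β 0 = 0 := by simp [quadSq]
  have hdet0 : (Matrix.fromBlocks Q (0 : Matrix (Fin n) (Fin n) ℝ)
      (0 : Matrix (Fin n) (Fin n) ℝ)ᵀ Q).det = Q.det * Q.det := by
    rw [Matrix.transpose_zero, Matrix.det_fromBlocks_zero₂₁]
  unfold secondMomentV
  rw [hq0, hdet0, hblock, hdet1K,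
    Real.log_mul hdQ.ne' (mul_pos hdQ hdK).ne', Real.log_mul hdQ.ne' hdK.ne',
    Real.log_mul hdQ.ne' hdQ.ne']
  linarith


end
end

section
/- Lipschitz property of the free energy in the inverse temperatures: Let n ≥ 1, C > 0 and ε > 0. There exists L = L(C,n) > 0 such that lim_{N→∞} P( for all symmetric positive definite Q ∈ ℝ^{n×n} with ones on the diagonal and all β¹, β² ∈ [0,∞)^n with |β¹|, |β²| ≤ C : |F^ε_N(β¹,0,Q) − F^ε_N(β²,0,Q)| ≤ L |β¹ − β²| ) = 1. -/
noncomputable section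

open MeasureTheory ProbabilityTheory Filter Matrix Real
open scoped BigOperators ENNReal NNReal

namespace SKLaux

open Metric

abbrev EN (N : ℕ) := EuclideanSpace ℝ (Fin N)

def qf {N : ℕ} (J : Fin N → Fin N → ℝ) (x : Fin N → ℝ) : ℝ := ∑ i, ∑ j, J i j * x i * x j

lemma qf_smul {N : ℕ} (J : Fin N → Fin N → ℝ) (c : ℝ) (x : EN N) :
    qf J (c • x) = c ^ 2 * qf J x := by
  simp only [qf, Finset.mul_sum]
  refine Finset.sum_congr rfl fun i _ => Finset.sum_congr rfl fun j _ => ?_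
  simp only [Pi.smul_apply, smul_eq_mul]; ring

lemma qf_zero {N : ℕ} (J : Fin N → Fin N → ℝ) : qf J (0 : EN N) = 0 := by
  simp [qf]

def bf {N : ℕ} (J : Fin N → Fin N → ℝ) (x y : EN N) : ℝ :=
  (qf J (x + y) - qf J (x - y)) / 4

lemma bf_eq {N : ℕ} (J : Fin N → Fin N → ℝ) (x y : EN N) :
    bf J x y = ∑ i, ∑ j, J i j * (x i * y j + y i * x j) / 2 := by
  simp only [bf, qf, ← Finset.sum_sub_distrib, Finset.sum_div]
  refine Finset.sum_congr rfl fun i _ => Finset.sum_congr rfl fun j _ => ?_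
  simp only [Pi.add_apply, Pi.sub_apply]; ring

lemma qf_sub_qf {N : ℕ} (J : Fin N → Fin N → ℝ) (σ x : EN N) :
    qf J σ - qf J x = bf J (σ + x) (σ - x) := by
  unfold bf
  have h1 : (σ + x) + (σ - x) = (2:ℝ) • σ := by module
  have h2 : (σ + x) - (σ - x) = (2:ℝ) • x := by module
  rw [← WithLp.ofLp_add (x := σ + x) (y := σ - x), ← WithLp.ofLp_sub (x := σ + x) (y := σ - x), h1, h2, WithLp.ofLp_smul, WithLp.ofLp_smul, qf_smul,
    qf_smul]; ring

lemma bf_smul_left {N : ℕ} (J : Fin N → Fin N → ℝ) (c : ℝ) (x y : EN N) :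
    bf J (c • x) y = c * bf J x y := by
  simp only [bf_eq, Finset.mul_sum]
  refine Finset.sum_congr rfl fun i _ => Finset.sum_congr rfl fun j _ => ?_
  simp only [PiLp.smul_apply, smul_eq_mul]; ring

lemma bf_smul_right {N : ℕ} (J : Fin N → Fin N → ℝ) (c : ℝ) (x y : EN N) :
    bf J x (c • y) = c * bf J x y := by
  simp only [bf_eq, Finset.mul_sum]
  refine Finset.sum_congr rfl fun i _ => Finset.sum_congr rfl fun j _ => ?_
  simp only [PiLp.smul_apply, smul_eq_mul]; ring

lemma bf_bound {N : ℕ} (J : Fin N → Fin N → ℝ) {Q : ℝ} (hQ0 : 0 ≤ Q)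
    (hQ : ∀ y : EN N, |qf J y| ≤ Q * ‖y‖ ^ 2) (x y : EN N) :
    |bf J x y| ≤ Q * ‖x‖ * ‖y‖ := by
  by_cases hx : x = 0
  · subst hx
    have : bf J 0 y = 0 := by
      have hn : qf J ((-1 : ℝ) • y) = qf J y := by rw [qf_smul]; ring
      simp only [bf, zero_add, zero_sub]
      rw [WithLp.ofLp_zero, zero_add, zero_sub,
        show (-WithLp.ofLp y : Fin N → ℝ) = (-1 : ℝ) • WithLp.ofLp y by module, hn]; ring
    rw [this, abs_zero]
    positivity
  by_cases hy : y = 0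
  · subst hy
    have : bf J x 0 = 0 := by simp [bf]
    rw [this, abs_zero]
    positivity
  have hxn : (0:ℝ) < ‖x‖ := norm_pos_iff.2 hx
  have hyn : (0:ℝ) < ‖y‖ := norm_pos_iff.2 hy
  set u : EN N := ‖x‖⁻¹ • x with hu
  set v : EN N := ‖y‖⁻¹ • y with hv
  have hun : ‖u‖ = 1 := by
    rw [hu, norm_smul]; simp [abs_of_pos (inv_pos.2 hxn), inv_mul_cancel₀ hxn.ne']
  have hvn : ‖v‖ = 1 := by
    rw [hv, norm_smul]; simp [abs_of_pos (inv_pos.2 hyn), inv_mul_cancel₀ hyn.ne']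
  have key : |bf J u v| ≤ Q := by
    have h1 : |qf J (u + v)| ≤ Q * ‖u + v‖ ^ 2 := hQ _
    have h2 : |qf J (u - v)| ≤ Q * ‖u - v‖ ^ 2 := hQ _
    have hpar : ‖u + v‖ * ‖u + v‖ + ‖u - v‖ * ‖u - v‖ = 2 * (‖u‖ * ‖u‖ + ‖v‖ * ‖v‖) :=
      by simpa only [sq] using parallelogram_law_with_norm ℝ u v
    rw [hun, hvn] at hpar
    have hstep : |bf J u v| ≤ (|qf J (u + v)| + |qf J (u - v)|) / 4 := by
      rw [bf, abs_div]
      have : |(4:ℝ)| = 4 := by norm_num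
      rw [this]
      gcongr
      exact abs_sub _ _
    refine hstep.trans ?_
    have h3 : |qf J (u + v)| + |qf J (u - v)| ≤ Q * ‖u + v‖ ^ 2 + Q * ‖u - v‖ ^ 2 := by gcongr
    have h4 : Q * ‖u + v‖ ^ 2 + Q * ‖u - v‖ ^ 2 = Q * 4 := by nlinarith [hpar]
    calc (|qf J (u + v)| + |qf J (u - v)|) / 4 ≤ (Q * ‖u + v‖ ^ 2 + Q * ‖u - v‖ ^ 2) / 4 := by
          gcongr
      _ = Q := by rw [h4]; ring
  have hxy : bf J x y = ‖x‖ * (‖y‖ * bf J u v) := by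
    rw [← bf_smul_right, ← bf_smul_left]
    congr 1
    · rw [hu, smul_smul, mul_inv_cancel₀ hxn.ne', one_smul]
    · rw [hv, smul_smul, mul_inv_cancel₀ hyn.ne', one_smul]
  rw [hxy, abs_mul, abs_mul, abs_of_pos hxn, abs_of_pos hyn]
  calc ‖x‖ * (‖y‖ * |bf J u v|) ≤ ‖x‖ * (‖y‖ * Q) := by gcongr
    _ = Q * ‖x‖ * ‖y‖ := by ring

lemma continuous_qf {N : ℕ} (J : Fin N → Fin N → ℝ) :
    Continuous fun x : EN N => qf J x := by
  unfold qf
  refine continuous_finset_sum _ fun i _ => continuous_finset_sum _ fun j _ => ?_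
  have hcoord : ∀ k : Fin N, Continuous fun x : EN N => x k := fun k =>
    (EuclideanSpace.proj k : EN N →L[ℝ] ℝ).continuous
  exact (continuous_const.mul (hcoord i)).mul (hcoord j)

lemma global_of_net {N : ℕ} (hN : 1 ≤ N) (J : Fin N → Fin N → ℝ)
    (T : Finset (EN N)) (hTs : ∀ x ∈ T, x ∈ Metric.sphere (0 : EN N) 1)
    (hcov : ∀ σ ∈ Metric.sphere (0 : EN N) 1, ∃ x ∈ T, dist σ x ≤ 1/4)
    {K : ℝ} (hb : ∀ x ∈ T, |qf J x| ≤ K) :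
    ∀ y : Fin N → ℝ, |qf J y| ≤ 2 * K * (∑ i, y i ^ 2) := by
  have hne : (Metric.sphere (0 : EN N) 1).Nonempty :=
    ⟨EuclideanSpace.single ⟨0, hN⟩ 1, by simp⟩
  obtain ⟨xs, hxs, hmax⟩ := (isCompact_sphere (0 : EN N) 1).exists_isMaxOn hne
    ((continuous_qf J).abs.continuousOn)
  set M := |qf J xs| with hM
  have hM0 : 0 ≤ M := abs_nonneg _
  have hMall : ∀ y : EN N, |qf J y| ≤ M * ‖y‖ ^ 2 := by
    intro y
    by_cases hy : y = 0
    · subst hy; rw [qf_zero, abs_zero]; positivity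
    · have hyn : (0:ℝ) < ‖y‖ := norm_pos_iff.2 hy
      have hmem : (‖y‖⁻¹ • y) ∈ Metric.sphere (0 : EN N) 1 := by
        simp [norm_smul, abs_of_pos (inv_pos.2 hyn), inv_mul_cancel₀ hyn.ne']
      have h1 : |qf J (‖y‖⁻¹ • y)| ≤ M := hmax hmem
      have h2 : qf J y = ‖y‖ ^ 2 * qf J (‖y‖⁻¹ • y) := by
        rw [qf_smul]
        field_simp
      rw [h2, abs_mul, abs_of_nonneg (by positivity : (0:ℝ) ≤ ‖y‖ ^ 2)]
      calc ‖y‖ ^ 2 * |qf J (‖y‖⁻¹ • y)| ≤ ‖y‖ ^ 2 * M := by gcongr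
        _ = M * ‖y‖ ^ 2 := by ring
  have hM2K : M ≤ 2 * K := by
    obtain ⟨x, hxT, hdist⟩ := hcov xs hxs
    have hd : qf J xs - qf J x = bf J (xs + x) (xs - x) := qf_sub_qf J xs x
    have hbb : |bf J (xs + x) (xs - x)| ≤ M * ‖xs + x‖ * ‖xs - x‖ := bf_bound J hM0 hMall _ _
    have hxn : ‖xs‖ = 1 := by simpa using hxs
    have hxn2 : ‖x‖ = 1 := by simpa using hTs x hxT
    have hsum : ‖xs + x‖ ≤ 2 := by
      calc ‖xs + x‖ ≤ ‖xs‖ + ‖x‖ := norm_add_le _ _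
        _ = 2 := by rw [hxn, hxn2]; norm_num
    have hdiff : ‖xs - x‖ ≤ 1/4 := by rwa [← dist_eq_norm]
    have : M ≤ K + M * 2 * (1/4) := by
      calc M = |qf J xs| := hM
        _ = |(qf J xs - qf J x) + qf J x| := by ring_nf
        _ ≤ |qf J xs - qf J x| + |qf J x| := abs_add_le _ _
        _ ≤ M * ‖xs + x‖ * ‖xs - x‖ + K := by
            rw [hd]
            gcongr
            exact hb x hxT
        _ ≤ M * 2 * (1/4) + K := by
            have h1 : M * ‖xs + x‖ * ‖xs - x‖ ≤ M * 2 * (1/4) := by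
              calc M * ‖xs + x‖ * ‖xs - x‖ ≤ M * 2 * ‖xs - x‖ := by gcongr
                _ ≤ M * 2 * (1/4) := by gcongr
            linarith
        _ = K + M * 2 * (1/4) := by ring
    linarith
  intro y
  have hnorm : ‖((WithLp.toLp 2 y : EN N))‖ ^ 2 = ∑ i, y i ^ 2 := by
    rw [EuclideanSpace.norm_eq, Real.sq_sqrt (by positivity)]
    simp [Real.norm_eq_abs, sq_abs]
  calc |qf J y| ≤ M * ‖((WithLp.toLp 2 y : EN N))‖ ^ 2 := hMall (WithLp.toLp 2 y)
    _ ≤ 2 * K * ‖((WithLp.toLp 2 y : EN N))‖ ^ 2 := by gcongr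
    _ = 2 * K * (∑ i, y i ^ 2) := by rw [hnorm]

lemma card_bound {N : ℕ} (hN : 1 ≤ N) {M : Set (EN N)} (hMs : M ⊆ sphere (0 : EN N) 1)
    (hsep : M.Pairwise fun a b => 1/4 ≤ dist a b) (F : Finset (EN N)) (hF : ↑F ⊆ M) :
    F.card ≤ 9 ^ N := by
  haveI : Nontrivial (EN N) := by
    refine ⟨0, EuclideanSpace.single ⟨0, hN⟩ 1, ?_⟩
    intro h
    have := congrArg (fun f => ‖f‖) h
    simp at this
  set μ : Measure (EN N) := volume with hμ
  have hfr : Module.finrank ℝ (EN N) = N := finrank_euclideanSpace_fin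
  have hballx : ∀ x : EN N, μ (ball x (1/8)) = ENNReal.ofReal ((1/8 : ℝ) ^ N) * μ (ball 0 1) := by
    intro x
    rw [Measure.addHaar_ball μ x (by norm_num : (0:ℝ) ≤ 1/8), hfr]
  have hdisj : (↑F : Set (EN N)).PairwiseDisjoint fun x => ball x (1/8) := by
    intro a ha b hb hab
    exact ball_disjoint_ball (by
      have := hsep (hF ha) (hF hb) hab
      linarith)
  have hunion : μ (⋃ x ∈ F, ball x (1/8)) = ∑ x ∈ F, μ (ball x (1/8)) :=
    measure_biUnion_finset hdisj fun x _ => measurableSet_ball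
  have hsub : (⋃ x ∈ F, ball x (1/8)) ⊆ ball (0 : EN N) (9/8) := by
    intro z hz
    simp only [Set.mem_iUnion] at hz
    obtain ⟨x, hxF, hzx⟩ := hz
    have hx1 : ‖x‖ = 1 := by simpa using hMs (hF hxF)
    have : dist z 0 ≤ dist z x + dist x 0 := dist_triangle _ _ _
    simp only [mem_ball] at hzx ⊢
    rw [dist_zero_right] at this ⊢
    rw [dist_zero_right, hx1] at this
    linarith
  have hbig : μ (ball (0 : EN N) (9/8)) = ENNReal.ofReal ((9/8 : ℝ) ^ N) * μ (ball 0 1) :=  by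
    rw [Measure.addHaar_ball μ 0 (by norm_num : (0:ℝ) ≤ 9/8), hfr]
  have hineq : (F.card : ℝ≥0∞) * (ENNReal.ofReal ((1/8 : ℝ) ^ N) * μ (ball 0 1))
      ≤ ENNReal.ofReal ((9/8 : ℝ) ^ N) * μ (ball 0 1) := by
    calc (F.card : ℝ≥0∞) * (ENNReal.ofReal ((1/8 : ℝ) ^ N) * μ (ball 0 1))
        = ∑ _x ∈ F, (ENNReal.ofReal ((1/8 : ℝ) ^ N) * μ (ball 0 1)) := by
          rw [Finset.sum_const, nsmul_eq_mul]
      _ = ∑ x ∈ F, μ (ball x (1/8)) := by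
          refine Finset.sum_congr rfl fun x _ => (hballx x).symm
      _ = μ (⋃ x ∈ F, ball x (1/8)) := hunion.symm
      _ ≤ μ (ball (0 : EN N) (9/8)) := measure_mono hsub
      _ = ENNReal.ofReal ((9/8 : ℝ) ^ N) * μ (ball 0 1) := hbig
  have hb0 : μ (ball (0 : EN N) 1) ≠ 0 := (measure_ball_pos μ 0 one_pos).ne'
  have hbt : μ (ball (0 : EN N) 1) ≠ ⊤ := measure_ball_lt_top.ne
  have hsmall0 : ENNReal.ofReal ((1/8 : ℝ) ^ N) ≠ 0 := by
    rw [Ne, ENNReal.ofReal_eq_zero, not_le]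
    positivity
  have hsmallt : ENNReal.ofReal ((1/8 : ℝ) ^ N) ≠ ⊤ := ENNReal.ofReal_ne_top
  have hcard : (F.card : ℝ≥0∞)
      ≤ ENNReal.ofReal ((9/8 : ℝ) ^ N) / ENNReal.ofReal ((1/8 : ℝ) ^ N) := by
    rw [ENNReal.le_div_iff_mul_le (Or.inl hsmall0) (Or.inl hsmallt)]
    rw [← mul_assoc] at hineq
    exact (ENNReal.mul_le_mul_iff_left hb0 hbt).mp hineq
  have hdiv : ENNReal.ofReal ((9/8 : ℝ) ^ N) / ENNReal.ofReal ((1/8 : ℝ) ^ N)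
      = ENNReal.ofReal ((9 : ℝ) ^ N) := by
    rw [← ENNReal.ofReal_div_of_pos (by positivity)]
    congr 1
    rw [← div_pow]
    norm_num
  rw [hdiv] at hcard
  have : ((9 ^ N : ℕ) : ℝ≥0∞) = ENNReal.ofReal ((9:ℝ) ^ N) := by
    rw [← ENNReal.ofReal_natCast]
    congr 1
    push_cast
    ring
  rw [← this, Nat.cast_le] at hcard
  exact hcard

lemma exists_net (N : ℕ) (hN : 1 ≤ N) :
    ∃ T : Finset (EN N), (∀ x ∈ T, x ∈ sphere (0 : EN N) 1) ∧ T.card ≤ 9 ^ N ∧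
      ∀ σ ∈ sphere (0 : EN N) 1, ∃ x ∈ T, dist σ x ≤ 1/4 := by
  classical
  set S : Set (Set (EN N)) :=
    {A | A ⊆ sphere (0 : EN N) 1 ∧ A.Pairwise fun a b => 1/4 ≤ dist a b} with hS
  obtain ⟨M, hMmax⟩ : ∃ M, Maximal (· ∈ S) M := by
    refine zorn_subset S fun c hcS hchain =>
      ⟨⋃₀ c, ⟨?_, ?_⟩, fun s hs => Set.subset_sUnion_of_mem hs⟩
    · intro x hx
      obtain ⟨A, hAc, hxA⟩ := hx
      exact (hcS hAc).1 hxA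
    · intro a ha b hb hab
      obtain ⟨A, hAc, haA⟩ := ha
      obtain ⟨B, hBc, hbB⟩ := hb
      rcases hchain.total hAc hBc with h | h
      · exact (hcS hBc).2 (h haA) hbB hab
      · exact (hcS hAc).2 haA (h hbB) hab
  have hMS : M ∈ S := hMmax.1
  have hfin : M.Finite := by
    by_contra hinf
    have hinf' : M.Infinite := hinf
    obtain ⟨F, hFsub, hFcard⟩ := hinf'.exists_subset_card_eq (9 ^ N + 1)
    have := card_bound hN hMS.1 hMS.2 F hFsub
    omega
  refine ⟨hfin.toFinset, ?_, ?_, ?_⟩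
  · intro x hx
    rw [Set.Finite.mem_toFinset] at hx
    exact hMS.1 hx
  · exact card_bound hN hMS.1 hMS.2 hfin.toFinset (by simp)
  · intro σ hσ
    by_contra hno
    push_neg at hno
    have hnoM : ∀ x ∈ M, 1/4 < dist σ x := by
      intro x hx
      exact hno x (by rwa [Set.Finite.mem_toFinset])
    have hσM : σ ∉ M := by
      intro hσM
      have := hnoM σ hσM
      simp at this
      linarith
    have hins : insert σ M ∈ S := by
      constructor
      · intro x hx
        rcases hx with rfl | hx
        · exact hσ
        · exact hMS.1 hx
      · refine Set.pairwise_insert.2 ⟨hMS.2, fun b hb _ => ⟨le_of_lt (hnoM b hb), ?_⟩⟩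
        rw [dist_comm]
        exact le_of_lt (hnoM b hb)
    have : insert σ M ⊆ M := hMmax.2 hins (Set.subset_insert σ M)
    exact hσM (this (Set.mem_insert σ M))

/-! ### Gaussian computations -/

lemma sqrt_two_pi_pos : (0:ℝ) < Real.sqrt (2 * Real.pi) :=
  Real.sqrt_pos.2 (by positivity)

lemma exp_shift (c : ℝ) : ∀ x : ℝ, Real.exp (c * x) * gaussianPDFReal 0 1 x
    = (Real.sqrt (2 * Real.pi))⁻¹ * Real.exp (c ^ 2 / 2) * Real.exp (-(1/2) * (x - c) ^ 2) := by
  intro x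
  rw [gaussianPDFReal_def]
  simp only [NNReal.coe_one, mul_one, sub_zero]
  have key : Real.exp (c*x) * Real.exp (-x^2/2)
      = Real.exp (c^2/2) * Real.exp (-(1/2)*(x-c)^2) := by
    rw [← Real.exp_add, ← Real.exp_add, Real.exp_eq_exp]; ring
  calc Real.exp (c*x) * ((Real.sqrt (2*Real.pi))⁻¹ * Real.exp (-x^2/2))
      = (Real.sqrt (2*Real.pi))⁻¹ * (Real.exp (c*x) * Real.exp (-x^2/2)) := by ring
    _ = (Real.sqrt (2*Real.pi))⁻¹ * (Real.exp (c^2/2) * Real.exp (-(1/2)*(x-c)^2)) := by rw [key]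
    _ = (Real.sqrt (2*Real.pi))⁻¹ * Real.exp (c ^ 2 / 2) * Real.exp (-(1/2) * (x - c) ^ 2) := by
        ring

lemma integrable_gauss_weight (c : ℝ) :
    Integrable (fun x : ℝ => Real.exp (c * x) * gaussianPDFReal 0 1 x) := by
  have h : Integrable (fun x : ℝ => Real.exp (-(1/2 : ℝ) * (x - c) ^ 2)) :=
    (integrable_exp_neg_mul_sq (by norm_num : (0:ℝ) < 1/2)).comp_sub_right c
  have := (h.const_mul ((Real.sqrt (2 * Real.pi))⁻¹ * Real.exp (c ^ 2 / 2)))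
  refine this.congr ?_
  filter_upwards with x
  rw [exp_shift c x]

lemma integral_gauss_weight (c : ℝ) :
    ∫ x : ℝ, Real.exp (c * x) * gaussianPDFReal 0 1 x = Real.exp (c ^ 2 / 2) := by
  have h1 : ∫ x : ℝ, Real.exp (c * x) * gaussianPDFReal 0 1 x
      = ∫ x : ℝ, (Real.sqrt (2 * Real.pi))⁻¹ * Real.exp (c ^ 2 / 2)
          * Real.exp (-(1/2 : ℝ) * (x - c) ^ 2) := by
    refine integral_congr_ae ?_
    filter_upwards with x
    rw [exp_shift c x]
  rw [h1, integral_const_mul]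
  have h2 : ∫ x : ℝ, Real.exp (-(1/2 : ℝ) * (x - c) ^ 2)
      = ∫ x : ℝ, Real.exp (-(1/2 : ℝ) * x ^ 2) :=
    integral_sub_right_eq_self (fun x => Real.exp (-(1/2 : ℝ) * x ^ 2)) c
  rw [h2, integral_gaussian]
  rw [show Real.pi / (1/2) = 2 * Real.pi by ring]
  field_simp

lemma gaussian_mgf_integrable (c : ℝ) :
    Integrable (fun x => Real.exp (c * x)) (gaussianReal 0 1) := by
  rw [gaussianReal_of_var_ne_zero 0 one_ne_zero]
  rw [integrable_withDensity_iff (measurable_gaussianPDF 0 1)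
    (Filter.Eventually.of_forall fun x => ENNReal.ofReal_lt_top)]
  refine (integrable_gauss_weight c).congr ?_
  filter_upwards with x
  rw [gaussianPDF_def]
  simp only [ENNReal.toReal_ofReal (gaussianPDFReal_nonneg 0 1 x)]

lemma gaussian_mgf (c : ℝ) :
    ∫ x, Real.exp (c * x) ∂(gaussianReal 0 1) = Real.exp (c ^ 2 / 2) := by
  rw [gaussianReal_of_var_ne_zero 0 one_ne_zero]
  have hpdf : gaussianPDF 0 1 = fun x => ((gaussianPDFReal 0 1 x).toNNReal : ℝ≥0∞) := by
    funext x
    rw [gaussianPDF_def]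
    rfl
  rw [hpdf, integral_withDensity_eq_integral_smul
    (measurable_gaussianPDFReal 0 1).real_toNNReal]
  rw [← integral_gauss_weight c]
  refine integral_congr_ae ?_
  filter_upwards with x
  rw [NNReal.smul_def, smul_eq_mul, Real.coe_toNNReal _ (gaussianPDFReal_nonneg 0 1 x)]
  ring

lemma disorder_exp_integrable (N : ℕ) (c : Fin N → Fin N → ℝ) :
    Integrable (fun J => Real.exp (∑ i, ∑ j, c i j * J i j)) (disorder N) := by
  letI : MeasureSpace ℝ := ⟨gaussianReal 0 1⟩
  haveI : SigmaFinite (volume : Measure ℝ) := inferInstanceAs (SigmaFinite (gaussianReal 0 1))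
  haveI : SigmaFinite (volume : Measure (Fin N → ℝ)) :=
    inferInstanceAs (SigmaFinite (Measure.pi fun _ : Fin N => gaussianReal 0 1))
  have hinner : ∀ i, Integrable (fun y : Fin N → ℝ => Real.exp (∑ j, c i j * y j)) := by
    intro i
    have : (fun y : Fin N → ℝ => Real.exp (∑ j, c i j * y j))
        = fun y => ∏ j, (fun t : ℝ => Real.exp (c i j * t)) (y j) := by
      funext y
      rw [Real.exp_sum]
    rw [this]
    exact Integrable.fintype_prod fun j => gaussian_mgf_integrable (c i j)
  have : (fun J : Fin N → Fin N → ℝ => Real.exp (∑ i, ∑ j, c i j * J i j))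
      = fun J => ∏ i, (fun y : Fin N → ℝ => Real.exp (∑ j, c i j * y j)) (J i) := by
    funext J
    rw [Real.exp_sum]
  show Integrable _ (volume : Measure (Fin N → Fin N → ℝ))
  rw [this]
  exact Integrable.fintype_prod fun i => hinner i

lemma disorder_mgf (N : ℕ) (c : Fin N → Fin N → ℝ) :
    ∫ J, Real.exp (∑ i, ∑ j, c i j * J i j) ∂(disorder N)
      = Real.exp ((∑ i, ∑ j, (c i j) ^ 2) / 2) := by
  letI : MeasureSpace ℝ := ⟨gaussianReal 0 1⟩
  haveI : SigmaFinite (volume : Measure ℝ) := inferInstanceAs (SigmaFinite (gaussianReal 0 1))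
  haveI : SigmaFinite (volume : Measure (Fin N → ℝ)) :=
    inferInstanceAs (SigmaFinite (Measure.pi fun _ : Fin N => gaussianReal 0 1))
  have h1 : ∫ J, Real.exp (∑ i, ∑ j, c i j * J i j) ∂(disorder N)
      = ∫ J : Fin N → (Fin N → ℝ),
          ∏ i, (fun y : Fin N → ℝ => Real.exp (∑ j, c i j * y j)) (J i) := by
    refine integral_congr_ae ?_
    filter_upwards with J
    rw [Real.exp_sum]
  rw [h1, MeasureTheory.integral_fintype_prod_volume_eq_prod
    (f := fun (i : Fin N) (y : Fin N → ℝ) => Real.exp (∑ j, c i j * y j))]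
  have h2 : ∀ i, ∫ y : Fin N → ℝ, Real.exp (∑ j, c i j * y j)
      = ∏ j, Real.exp ((c i j) ^ 2 / 2) := by
    intro i
    have : ∫ y : Fin N → ℝ, Real.exp (∑ j, c i j * y j)
        = ∫ y : Fin N → ℝ, ∏ j, (fun t : ℝ => Real.exp (c i j * t)) (y j) := by
      refine integral_congr_ae ?_
      filter_upwards with y
      rw [Real.exp_sum]
    rw [this, MeasureTheory.integral_fintype_prod_volume_eq_prod
      (f := fun (j : Fin N) (t : ℝ) => Real.exp (c i j * t))]
    exact Finset.prod_congr rfl fun j _ => gaussian_mgf (c i j)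
  calc ∏ i, ∫ y : Fin N → ℝ, Real.exp (∑ j, c i j * y j)
      = ∏ i, ∏ j, Real.exp ((c i j) ^ 2 / 2) := Finset.prod_congr rfl fun i _ => h2 i
    _ = Real.exp ((∑ i, ∑ j, (c i j) ^ 2) / 2) := by
        rw [Finset.sum_div, Real.exp_sum]
        refine Finset.prod_congr rfl fun i _ => ?_
        rw [Finset.sum_div, Real.exp_sum]

instance disorder_prob (N : ℕ) : IsProbabilityMeasure (disorder N) := by
  unfold disorder; infer_instance

lemma tail_bound (N : ℕ) (c : Fin N → Fin N → ℝ) (hv : ∑ i, ∑ j, (c i j) ^ 2 = 1)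
    {t : ℝ} (ht : 0 ≤ t) :
    disorder N {J | t ≤ ∑ i, ∑ j, c i j * J i j} ≤ ENNReal.ofReal (Real.exp (-(t^2)/2)) := by
  set X : (Fin N → Fin N → ℝ) → ℝ := fun J => ∑ i, ∑ j, c i j * J i j with hX
  have hrew : ∀ J, t * X J = ∑ i, ∑ j, (t * c i j) * J i j := by
    intro J
    rw [hX]
    simp only [Finset.mul_sum]
    exact Finset.sum_congr rfl fun i _ => Finset.sum_congr rfl fun j _ => by ring
  have h_int : Integrable (fun J => Real.exp (t * X J)) (disorder N) := by
    have := disorder_exp_integrable N (fun i j => t * c i j)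
    refine this.congr ?_
    filter_upwards with J
    rw [hrew J]
  have hmgf : mgf X (disorder N) t = Real.exp (t ^ 2 / 2) := by
    rw [mgf]
    have : ∫ J, Real.exp (t * X J) ∂(disorder N)
        = ∫ J, Real.exp (∑ i, ∑ j, (t * c i j) * J i j) ∂(disorder N) := by
      refine integral_congr_ae ?_
      filter_upwards with J
      rw [hrew J]
    rw [this, disorder_mgf]
    congr 1
    have : ∑ i, ∑ j, (t * c i j) ^ 2 = t ^ 2 * ∑ i, ∑ j, (c i j) ^ 2 := by
      simp only [Finset.mul_sum]
      exact Finset.sum_congr rfl fun i _ => Finset.sum_congr rfl fun j _ => by ring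
    rw [this, hv]
    ring
  have hch := measure_ge_le_exp_mul_mgf (X := X) (μ := disorder N) t ht h_int
  rw [hmgf] at hch
  have hch2 : (disorder N {J | t ≤ X J}).toReal ≤ Real.exp (-(t^2)/2) := by
    refine hch.trans ?_
    rw [← Real.exp_add]
    apply le_of_eq
    congr 1
    ring
  calc disorder N {J | t ≤ X J}
      = ENNReal.ofReal ((disorder N {J | t ≤ X J}).toReal) :=
        (ENNReal.ofReal_toReal (measure_ne_top _ _)).symm
    _ ≤ ENNReal.ofReal (Real.exp (-(t^2)/2)) := ENNReal.ofReal_le_ofReal hch2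

lemma measurable_qf_J {N : ℕ} (x : Fin N → ℝ) :
    Measurable fun J : Fin N → Fin N → ℝ => qf J x := by
  unfold qf
  refine Finset.measurable_sum _ fun i _ => Finset.measurable_sum _ fun j _ => ?_
  exact ((measurable_pi_apply j).comp (measurable_pi_apply i)).mul_const _ |>.mul_const _

lemma sphere_tail (N : ℕ) {x : EuclideanSpace ℝ (Fin N)}
    (hx : x ∈ Metric.sphere (0 : EuclideanSpace ℝ (Fin N)) 1) :
    disorder N {J | 3 * Real.sqrt N < |qf J x|}
      ≤ ENNReal.ofReal (Real.exp (-(9 * N)/2)) + ENNReal.ofReal (Real.exp (-(9 * N)/2)) := by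
  have hsum : ∑ i, x i ^ 2 = 1 := by
    have hn : ‖x‖ = 1 := by simpa using hx
    have := EuclideanSpace.norm_eq x
    rw [hn] at this
    have h0 : (0:ℝ) ≤ ∑ i, ‖x i‖ ^ 2 := by positivity
    have h2 : ∑ i, ‖x i‖ ^ 2 = 1 := by nlinarith [Real.sq_sqrt h0, this]
    simpa [Real.norm_eq_abs, sq_abs] using h2
  set c : Fin N → Fin N → ℝ := fun i j => x i * x j with hc
  have hv : ∑ i, ∑ j, (c i j) ^ 2 = 1 := by
    have : ∀ i, ∑ j, (c i j) ^ 2 = x i ^ 2 * ∑ j, x j ^ 2 := by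
      intro i
      rw [Finset.mul_sum]
      exact Finset.sum_congr rfl fun j _ => by rw [hc]; ring
    rw [Finset.sum_congr rfl fun i _ => this i, ← Finset.sum_mul, hsum]
    simp
  have hqf : ∀ J, qf J x = ∑ i, ∑ j, c i j * J i j := by
    intro J
    exact Finset.sum_congr rfl fun i _ => Finset.sum_congr rfl fun j _ => by rw [hc]; ring
  have ht : (0:ℝ) ≤ 3 * Real.sqrt N := by positivity
  have hsq : (3 * Real.sqrt N) ^ 2 = 9 * N := by
    rw [mul_pow, Real.sq_sqrt (Nat.cast_nonneg N)]
    norm_num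
  have hsub : {J : Fin N → Fin N → ℝ | 3 * Real.sqrt N < |qf J x|}
      ⊆ {J | 3 * Real.sqrt N ≤ ∑ i, ∑ j, c i j * J i j}
        ∪ {J | 3 * Real.sqrt N ≤ ∑ i, ∑ j, (-c i j) * J i j} := by
    intro J hJ
    simp only [Set.mem_setOf_eq] at hJ
    rcases abs_cases (qf J x) with ⟨he, _⟩ | ⟨he, _⟩
    · left
      simp only [Set.mem_setOf_eq]
      rw [← hqf J]
      linarith [hJ, he]
    · right
      simp only [Set.mem_setOf_eq]
      have : ∑ i, ∑ j, (-c i j) * J i j = -(∑ i, ∑ j, c i j * J i j) := by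
        rw [← Finset.sum_neg_distrib]
        exact Finset.sum_congr rfl fun i _ => by
          rw [← Finset.sum_neg_distrib]
          exact Finset.sum_congr rfl fun j _ => by ring
      rw [this, ← hqf J]
      linarith [hJ, he]
  have hv' : ∑ i, ∑ j, (-c i j) ^ 2 = 1 := by
    rw [← hv]
    exact Finset.sum_congr rfl fun i _ => Finset.sum_congr rfl fun j _ => by ring
  calc disorder N {J | 3 * Real.sqrt N < |qf J x|}
      ≤ disorder N ({J | 3 * Real.sqrt N ≤ ∑ i, ∑ j, c i j * J i j}
        ∪ {J | 3 * Real.sqrt N ≤ ∑ i, ∑ j, (-c i j) * J i j}) := measure_mono hsub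
    _ ≤ disorder N {J | 3 * Real.sqrt N ≤ ∑ i, ∑ j, c i j * J i j}
        + disorder N {J | 3 * Real.sqrt N ≤ ∑ i, ∑ j, (-c i j) * J i j} := measure_union_le _ _
    _ ≤ ENNReal.ofReal (Real.exp (-(9 * N)/2)) + ENNReal.ofReal (Real.exp (-(9 * N)/2)) := by
        gcongr
        · have := tail_bound N c hv ht
          rwa [hsq] at this
        · have := tail_bound N (fun i j => -c i j) hv' ht
          rwa [hsq] at this

/-! ### Sphere measure facts -/

lemma measurable_sphere_map (N : ℕ) :
    Measurable (fun σ : Metric.sphere (0 : EuclideanSpace ℝ (Fin N)) 1 =>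
      (EuclideanSpace.equiv (Fin N) ℝ) σ.val) :=
  ((EuclideanSpace.equiv (Fin N) ℝ).continuous.comp continuous_subtype_val).measurable

lemma sphereUniform_univ_le (N : ℕ) : sphereUniform N Set.univ ≤ 1 := by
  rw [sphereUniform, Measure.map_apply (measurable_sphere_map N) MeasurableSet.univ]
  rw [Set.preimage_univ, Measure.smul_apply, smul_eq_mul]
  rcases eq_or_ne ((volume : Measure (EuclideanSpace ℝ (Fin N))).toSphere Set.univ) 0 with h | h
  · rw [h]
    simp
  rcases eq_or_ne ((volume : Measure (EuclideanSpace ℝ (Fin N))).toSphere Set.univ) ⊤ with h' | h'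
  · rw [h']
    simp
  rw [ENNReal.inv_mul_cancel h h']

instance sphereUniform_finite (N : ℕ) : IsFiniteMeasure (sphereUniform N) :=
  ⟨lt_of_le_of_lt (sphereUniform_univ_le N) ENNReal.one_lt_top⟩

instance spheres_finite (n N : ℕ) : IsFiniteMeasure (spheres n N) := by
  constructor
  have : spheres n N Set.univ ≤ 1 := by
    rw [spheres, Measure.pi_univ]
    calc ∏ _k : Fin n, sphereUniform N Set.univ ≤ ∏ _k : Fin n, 1 :=
          Finset.prod_le_prod (fun _ _ => zero_le) (fun _ _ => sphereUniform_univ_le N)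
      _ = 1 := by simp
  exact this.trans_lt ENNReal.one_lt_top

lemma sphereUniform_dot_one (N : ℕ) :
    sphereUniform N {x : Fin N → ℝ | dot x x = 1}ᶜ = 0 := by
  have hS : MeasurableSet {x : Fin N → ℝ | dot x x = 1} := by
    have hm : Measurable fun x : Fin N → ℝ => dot x x :=
      Finset.measurable_sum _ fun i _ => (measurable_pi_apply i).mul (measurable_pi_apply i)
    exact hm (measurableSet_singleton 1)
  rw [sphereUniform, Measure.map_apply (measurable_sphere_map N) hS.compl]
  have : (fun σ : Metric.sphere (0 : EuclideanSpace ℝ (Fin N)) 1 =>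
      (EuclideanSpace.equiv (Fin N) ℝ) σ.val) ⁻¹' {x : Fin N → ℝ | dot x x = 1}ᶜ = ∅ := by
    rw [Set.preimage_compl, Set.compl_empty_iff]
    ext σ
    simp only [Set.mem_preimage, Set.mem_setOf_eq, Set.mem_univ, iff_true]
    have hval : ∀ i, (EuclideanSpace.equiv (Fin N) ℝ) σ.val i = σ.val i := fun i => rfl
    have hn : ‖σ.val‖ = 1 := by
      have := σ.2
      simpa using this
    have := EuclideanSpace.norm_eq σ.val
    rw [hn] at this
    have h0 : (0:ℝ) ≤ ∑ i, ‖σ.val i‖ ^ 2 := by positivity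
    have h2 : ∑ i, ‖σ.val i‖ ^ 2 = 1 := by nlinarith [Real.sq_sqrt h0, this]
    rw [dot]
    calc ∑ i, (EuclideanSpace.equiv (Fin N) ℝ) σ.val i * (EuclideanSpace.equiv (Fin N) ℝ) σ.val i
        = ∑ i, ‖σ.val i‖ ^ 2 := by
          refine Finset.sum_congr rfl fun i _ => ?_
          rw [hval i, Real.norm_eq_abs, sq_abs]
          ring
      _ = 1 := h2
  rw [this]
  simp

lemma ae_dot_one (n N : ℕ) :
    ∀ᵐ σ ∂(spheres n N), ∀ k, dot (σ k) (σ k) = 1 := by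
  rw [ae_iff]
  have hset : {σ : Fin n → Fin N → ℝ | ¬ ∀ k, dot (σ k) (σ k) = 1}
      = ⋃ k, {σ : Fin n → Fin N → ℝ | σ k ∈ {x : Fin N → ℝ | dot x x = 1}ᶜ} := by
    ext σ
    simp only [Set.mem_setOf_eq, Set.mem_iUnion, Set.mem_compl_iff]
    push_neg
    rfl
  rw [hset]
  refine le_antisymm ?_ zero_le
  calc spheres n N (⋃ k, {σ : Fin n → Fin N → ℝ | σ k ∈ {x : Fin N → ℝ | dot x x = 1}ᶜ})
      ≤ ∑' k, spheres n N {σ : Fin n → Fin N → ℝ | σ k ∈ {x : Fin N → ℝ | dot x x = 1}ᶜ} :=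
        measure_iUnion_le _
    _ = 0 := by
      refine ENNReal.tsum_eq_zero.2 fun k => ?_
      have heq : {σ : Fin n → Fin N → ℝ | σ k ∈ {x : Fin N → ℝ | dot x x = 1}ᶜ}
          = Set.univ.pi (Function.update (fun _ : Fin n => (Set.univ : Set (Fin N → ℝ))) k
              {x : Fin N → ℝ | dot x x = 1}ᶜ) := by
        ext σ
        simp only [Set.mem_setOf_eq, Set.mem_pi, Set.mem_univ, forall_true_left]
        constructor
        · intro h i
          rcases eq_or_ne i k with rfl | hik
          · rwa [Function.update_self]
          · rw [Function.update_of_ne hik]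
            trivial
        · intro h
          have := h k
          rwa [Function.update_self] at this
      rw [heq, spheres, Measure.pi_pi]
      refine Finset.prod_eq_zero (Finset.mem_univ k) ?_
      rw [Function.update_self]
      exact sphereUniform_dot_one N

lemma measurable_integrand (n N : ℕ) (β : Fin n → ℝ) (J : Fin N → Fin N → ℝ) :
    Measurable fun σ : Fin n → Fin N → ℝ =>
      Real.exp (∑ k, β k * ham N J (σ k)) := by
  refine Real.measurable_exp.comp (Finset.measurable_sum _ fun k _ => ?_)
  refine Measurable.const_mul ?_ (β k)
  unfold ham
  refine Measurable.const_mul ?_ _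
  refine Finset.measurable_sum _ fun i _ => Finset.measurable_sum _ fun j _ => ?_
  have h1 : Measurable fun σ : Fin n → Fin N → ℝ => σ k i :=
    (measurable_pi_apply i).comp (measurable_pi_apply k)
  have h2 : Measurable fun σ : Fin n → Fin N → ℝ => σ k j :=
    (measurable_pi_apply j).comp (measurable_pi_apply k)
  exact (h1.const_mul (J i j)).mul h2

lemma integrable_free (n N : ℕ) (β : Fin n → ℝ) (J : Fin N → Fin N → ℝ)
    (s : Set (Fin n → Fin N → ℝ)) :
    Integrable (fun σ : Fin n → Fin N → ℝ => Real.exp (∑ k, β k * ham N J (σ k)))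
      ((spheres n N).restrict s) := by
  set B : ℝ := ∑ k, |β k| * (Real.sqrt N * ∑ i, ∑ j, |J i j|) with hB
  refine Integrable.mono' (integrable_const (Real.exp B))
    (measurable_integrand n N β J).aestronglyMeasurable ?_
  filter_upwards [ae_restrict_of_ae (ae_dot_one n N)] with σ hσ
  rw [Real.norm_eq_abs, Real.abs_exp, Real.exp_le_exp, hB]
  have habs : ∀ k, ∀ i, |σ k i| ≤ 1 := by
    intro k i
    rw [abs_le_one_iff_mul_self_le_one]
    have h1 : σ k i * σ k i ≤ dot (σ k) (σ k) :=
      Finset.single_le_sum (f := fun i => σ k i * σ k i)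
        (fun i _ => mul_self_nonneg _) (Finset.mem_univ i)
    rw [hσ k] at h1
    exact h1
  have hham : ∀ k, |ham N J (σ k)| ≤ Real.sqrt N * ∑ i, ∑ j, |J i j| := by
    intro k
    rw [ham, abs_mul, abs_of_nonneg (Real.sqrt_nonneg _)]
    gcongr
    calc |∑ i, ∑ j, J i j * σ k i * σ k j| ≤ ∑ i, |∑ j, J i j * σ k i * σ k j| :=
          Finset.abs_sum_le_sum_abs _ _
      _ ≤ ∑ i, ∑ j, |J i j * σ k i * σ k j| := by
          gcongr with i _
          exact Finset.abs_sum_le_sum_abs _ _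
      _ ≤ ∑ i, ∑ j, |J i j| := by
          refine Finset.sum_le_sum fun i _ => Finset.sum_le_sum fun j _ => ?_
          rw [abs_mul, abs_mul]
          calc |J i j| * |σ k i| * |σ k j| ≤ |J i j| * 1 * 1 := by
                gcongr
                · exact habs k i
                · exact habs k j
            _ = |J i j| := by ring
  calc ∑ k, β k * ham N J (σ k) ≤ ∑ k, |β k * ham N J (σ k)| :=
        Finset.sum_le_sum fun k _ => le_abs_self _
    _ ≤ ∑ k, |β k| * (Real.sqrt N * ∑ i, ∑ j, |J i j|) := by
        refine Finset.sum_le_sum fun k _ => ?_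
        rw [abs_mul]
        exact mul_le_mul_of_nonneg_left (hham k) (abs_nonneg _)

lemma log_int_diff {α : Type*} {m : MeasurableSpace α} {μ : Measure α} {f g : α → ℝ} {c : ℝ}
    (hc : 0 ≤ c)
    (hfi : Integrable (fun a => Real.exp (f a)) μ) (hgi : Integrable (fun a => Real.exp (g a)) μ)
    (hb : ∀ᵐ a ∂μ, |f a - g a| ≤ c) :
    |Real.log (∫ a, Real.exp (f a) ∂μ) - Real.log (∫ a, Real.exp (g a) ∂μ)| ≤ c := by
  set I₁ := ∫ a, Real.exp (f a) ∂μ with hI₁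
  set I₂ := ∫ a, Real.exp (g a) ∂μ with hI₂
  have hI₁0 : 0 ≤ I₁ := integral_nonneg fun a => (Real.exp_pos _).le
  have hI₂0 : 0 ≤ I₂ := integral_nonneg fun a => (Real.exp_pos _).le
  have h12 : I₁ ≤ Real.exp c * I₂ := by
    rw [hI₁, hI₂, ← integral_const_mul]
    refine integral_mono_ae hfi (hgi.const_mul _) ?_
    filter_upwards [hb] with a ha
    rw [← Real.exp_add]
    apply Real.exp_le_exp.2
    have := (abs_le.1 ha).2
    linarith
  have h21 : I₂ ≤ Real.exp c * I₁ := by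
    rw [hI₁, hI₂, ← integral_const_mul]
    refine integral_mono_ae hgi (hfi.const_mul _) ?_
    filter_upwards [hb] with a ha
    rw [← Real.exp_add]
    apply Real.exp_le_exp.2
    have := (abs_le.1 ha).1
    linarith
  rcases eq_or_lt_of_le hI₁0 with h1z | h1p
  · have h2z : I₂ = 0 := by
      have : I₂ ≤ 0 := by
        rw [← h1z] at h21
        simpa using h21
      linarith
    rw [← h1z, h2z, Real.log_zero, sub_zero, abs_zero]
    exact hc
  rcases eq_or_lt_of_le hI₂0 with h2z | h2p
  · have h1z : I₁ ≤ 0 := by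
      rw [← h2z] at h12
      simpa using h12
    linarith
  rw [abs_le]
  constructor
  · have : Real.log I₂ ≤ Real.log (Real.exp c * I₁) :=
      Real.log_le_log (by positivity) h21
    rw [Real.log_mul (Real.exp_ne_zero c) h1p.ne', Real.log_exp] at this
    linarith
  · have : Real.log I₁ ≤ Real.log (Real.exp c * I₂) :=
      Real.log_le_log (by positivity) h12
    rw [Real.log_mul (Real.exp_ne_zero c) h2p.ne', Real.log_exp] at this
    linarith

end SKLaux

/-- **Lipschitz property of the free energy in the inverse temperatures** (Lemma 3.8):
there is `L = L(C,n) > 0` with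
`lim_{N→∞} P(∀ Q, ∀ |β¹|,|β²| ≤ C, |F^ε_N(β¹,0,Q) − F^ε_N(β²,0,Q)| ≤ L|β¹−β²|) = 1`. -/
theorem free_energy_lipschitz_in_beta (n : ℕ) (hn : 1 ≤ n)
    (C : ℝ) (hC : 0 < C) (ε : ℝ) (hε : 0 < ε) :
    ∃ L : ℝ, 0 < L ∧
      Filter.Tendsto (fun N : ℕ => disorder N
        {J | ∀ Q : Matrix (Fin n) (Fin n) ℝ, Q.IsSymm → Q.PosDef →
          (∀ k, Q k k = 1) →
          ∀ β₁ β₂ : Fin n → ℝ, (∀ k, 0 ≤ β₁ k) → (∀ k, 0 ≤ β₂ k) →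
            Real.sqrt (∑ k, β₁ k ^ 2) ≤ C → Real.sqrt (∑ k, β₂ k ^ 2) ≤ C →
            |freeEnergy n N β₁ 0 Q ε J - freeEnergy n N β₂ 0 Q ε J|
              ≤ L * Real.sqrt (∑ k, (β₁ k - β₂ k) ^ 2)})
        Filter.atTop (nhds 1) := by
  classical
  open SKLaux in
  have hn0 : (0:ℝ) < n := by exact_mod_cast hn
  have hsqn : (0:ℝ) < Real.sqrt n := Real.sqrt_pos.2 hn0
  refine ⟨6 * Real.sqrt n, by positivity, ?_⟩
  -- choose nets
  have hnet : ∀ N : ℕ, ∃ T : Finset (EN N),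
      1 ≤ N → ((∀ x ∈ T, x ∈ Metric.sphere (0 : EN N) 1) ∧ T.card ≤ 9 ^ N ∧
        ∀ σ ∈ Metric.sphere (0 : EN N) 1, ∃ x ∈ T, dist σ x ≤ 1/4) := by
    intro N
    by_cases hN : 1 ≤ N
    · obtain ⟨T, h1, h2, h3⟩ := exists_net N hN
      exact ⟨T, fun _ => ⟨h1, h2, h3⟩⟩
    · exact ⟨∅, fun h => absurd h hN⟩
  choose T hT using hnet
  set G : ∀ N : ℕ, Set (Fin N → Fin N → ℝ) :=
    fun N => {J | ∀ x ∈ T N, |qf J x| ≤ 3 * Real.sqrt N} with hG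
  have hGmeas : ∀ N, MeasurableSet (G N) := by
    intro N
    have : G N = ⋂ x ∈ T N, {J : Fin N → Fin N → ℝ | |qf J x| ≤ 3 * Real.sqrt N} := by
      ext J
      simp [hG]
    rw [this]
    refine MeasurableSet.biInter ((T N).countable_toSet) fun x _ => ?_
    exact measurableSet_le (measurable_qf_J x).abs measurable_const
  -- tail bound
  set δ : ℕ → ℝ≥0∞ := fun N =>
    ENNReal.ofReal ((9:ℝ) ^ N * (Real.exp (-(9 * N)/2) + Real.exp (-(9 * N)/2))) with hδdef
  have htail : ∀ N, 1 ≤ N → disorder N (G N)ᶜ ≤ δ N := by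
    intro N hN
    obtain ⟨hT1, hT2, _⟩ := hT N hN
    have hsub : (G N)ᶜ ⊆ ⋃ x ∈ T N, {J : Fin N → Fin N → ℝ | 3 * Real.sqrt N < |qf J x|} := by
      intro J hJ
      simp only [hG, Set.mem_compl_iff, Set.mem_setOf_eq, not_forall] at hJ
      obtain ⟨x, hxT, hx⟩ := hJ
      simp only [Set.mem_iUnion]
      exact ⟨x, hxT, by simpa using lt_of_not_ge hx⟩
    set e : ℝ≥0∞ := ENNReal.ofReal (Real.exp (-(9 * N)/2)) with he
    calc disorder N (G N)ᶜ
        ≤ disorder N (⋃ x ∈ T N, {J : Fin N → Fin N → ℝ | 3 * Real.sqrt N < |qf J x|}) :=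
          measure_mono hsub
      _ ≤ ∑ x ∈ T N, disorder N {J : Fin N → Fin N → ℝ | 3 * Real.sqrt N < |qf J x|} :=
          measure_biUnion_finset_le _ _
      _ ≤ ∑ _x ∈ T N, (e + e) := Finset.sum_le_sum fun x hx => sphere_tail N (hT1 x hx)
      _ = ((T N).card : ℝ≥0∞) * (e + e) := by rw [Finset.sum_const, nsmul_eq_mul]
      _ ≤ ((9 ^ N : ℕ) : ℝ≥0∞) * (e + e) := by
          have hcast : ((T N).card : ℝ≥0∞) ≤ ((9 ^ N : ℕ) : ℝ≥0∞) := by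
            exact_mod_cast hT2
          exact mul_le_mul_left hcast _
      _ = δ N := by
          rw [he, hδdef]
          rw [← ENNReal.ofReal_add (Real.exp_nonneg _) (Real.exp_nonneg _)]
          rw [← ENNReal.ofReal_natCast]
          rw [← ENNReal.ofReal_mul (by positivity)]
          congr 1
          push_cast
          ring
  have hδ0 : Filter.Tendsto δ Filter.atTop (nhds 0) := by
    have hre : ∀ N : ℕ, (9:ℝ) ^ N * (Real.exp (-(9 * N)/2) + Real.exp (-(9 * N)/2))
        = 2 * (9 * Real.exp (-(9/2) : ℝ)) ^ N := by
      intro N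
      have : Real.exp (-(9 * N)/2) = Real.exp (-(9/2) : ℝ) ^ N := by
        rw [← Real.exp_nat_mul]
        congr 1
        push_cast
        ring
      rw [this, mul_pow]
      ring
    have hr0 : (0:ℝ) ≤ 9 * Real.exp (-(9/2) : ℝ) := by positivity
    have hr1 : 9 * Real.exp (-(9/2) : ℝ) < 1 := by
      rw [Real.exp_neg]
      rw [mul_inv_lt_iff₀ (Real.exp_pos _)]
      have h1 : Real.exp ((9:ℝ)/2) = Real.exp ((3:ℝ)/2) ^ (3:ℕ) := by
        rw [← Real.exp_nat_mul]
        norm_num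
      have h2 : ((5:ℝ)/2) ^ (3:ℕ) ≤ Real.exp ((3:ℝ)/2) ^ (3:ℕ) := by
        apply pow_le_pow_left₀ (by norm_num)
        have := Real.add_one_le_exp ((3:ℝ)/2)
        linarith
      rw [h1]
      have : ((5:ℝ)/2) ^ (3:ℕ) = 125/8 := by norm_num
      nlinarith [h2]
    have hreal : Filter.Tendsto
        (fun N : ℕ => (9:ℝ) ^ N * (Real.exp (-(9 * N)/2) + Real.exp (-(9 * N)/2)))
        Filter.atTop (nhds 0) := by
      have h2 : Filter.Tendsto (fun N : ℕ => 2 * (9 * Real.exp (-(9/2) : ℝ)) ^ N)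
          Filter.atTop (nhds 0) := by
        have := (tendsto_pow_atTop_nhds_zero_of_lt_one hr0 hr1).const_mul (2:ℝ)
        simpa using this
      refine h2.congr fun N => (hre N).symm
    have := ENNReal.tendsto_ofReal (f := Filter.atTop) hreal
    simpa [hδdef] using this
  -- probability of G tends to 1
  have hkey : Filter.Tendsto (fun N => disorder N (G N)) Filter.atTop (nhds 1) := by
    have hlow : ∀ᶠ N in Filter.atTop, 1 - δ N ≤ disorder N (G N) := by
      filter_upwards [Filter.eventually_ge_atTop 1] with N hN
      have hcompl : disorder N (G N) = 1 - disorder N (G N)ᶜ := by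
        have := prob_compl_eq_one_sub (μ := disorder N) (hGmeas N).compl
        rwa [compl_compl] at this
      rw [hcompl]
      exact tsub_le_tsub_left (htail N hN) 1
    have hup : ∀ᶠ N in Filter.atTop, disorder N (G N) ≤ 1 :=
      Filter.Eventually.of_forall fun N => prob_le_one
    have hlt : Filter.Tendsto (fun N => 1 - δ N) Filter.atTop (nhds 1) := by
      have := ENNReal.Tendsto.sub (tendsto_const_nhds (x := (1:ℝ≥0∞)))
        hδ0 (Or.inl ENNReal.one_ne_top)
      simpa using this
    exact tendsto_of_tendsto_of_tendsto_of_le_of_le' hlt tendsto_const_nhds hlow hup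
  -- the deterministic inclusion
  have hsub : ∀ N : ℕ, 1 ≤ N → G N ⊆
      {J | ∀ Q : Matrix (Fin n) (Fin n) ℝ, Q.IsSymm → Q.PosDef →
          (∀ k, Q k k = 1) →
          ∀ β₁ β₂ : Fin n → ℝ, (∀ k, 0 ≤ β₁ k) → (∀ k, 0 ≤ β₂ k) →
            Real.sqrt (∑ k, β₁ k ^ 2) ≤ C → Real.sqrt (∑ k, β₂ k ^ 2) ≤ C →
            |freeEnergy n N β₁ 0 Q ε J - freeEnergy n N β₂ 0 Q ε J|
              ≤ 6 * Real.sqrt n * Real.sqrt (∑ k, (β₁ k - β₂ k) ^ 2)} := by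
    intro N hN J hJ
    obtain ⟨hT1, _, hT3⟩ := hT N hN
    have hglob : ∀ y : Fin N → ℝ, |qf J y| ≤ 2 * (3 * Real.sqrt N) * (∑ i, y i ^ 2) :=
      global_of_net hN J (T N) hT1 hT3 hJ
    intro Q _ _ _ β₁ β₂ _ _ _ _
    have hNR : (0:ℝ) < N := by exact_mod_cast hN
    set D : ℝ := Real.sqrt (∑ k, (β₁ k - β₂ k) ^ 2) with hD
    have hD0 : 0 ≤ D := Real.sqrt_nonneg _
    -- rewrite free energies
    have hfe : ∀ β : Fin n → ℝ, freeEnergy n N β 0 Q ε J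
        = (1 / (N:ℝ)) * Real.log (∫ σ in overlapSet n N Q ε,
            Real.exp (∑ k, β k * ham N J (σ k)) ∂ spheres n N) := by
      intro β
      unfold freeEnergy
      have hint : (∫ σ in overlapSet n N Q ε,
            Real.exp (∑ k, (β k * ham N J (σ k)
              + (N:ℝ) * dot ((0 : Fin n → Fin N → ℝ) k) (σ k))) ∂ spheres n N)
          = ∫ σ in overlapSet n N Q ε,
            Real.exp (∑ k, β k * ham N J (σ k)) ∂ spheres n N := by
        refine integral_congr_ae (Filter.Eventually.of_forall fun σ => ?_)
        simp [dot]
      rw [hint]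
    rw [hfe β₁, hfe β₂, ← mul_sub, abs_mul, abs_of_nonneg (by positivity : (0:ℝ) ≤ 1/(N:ℝ))]
    -- Cauchy-Schwarz
    have hCS : ∑ k, |β₁ k - β₂ k| ≤ Real.sqrt n * D := by
      have h := Finset.sum_mul_sq_le_sq_mul_sq Finset.univ (fun _ : Fin n => (1:ℝ))
        (fun k => |β₁ k - β₂ k|)
      simp only [one_mul, one_pow, sq_abs] at h
      have h1 : (∑ k, |β₁ k - β₂ k|) ^ 2 ≤ (n:ℝ) * ∑ k, (β₁ k - β₂ k) ^ 2 := by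
        calc (∑ k, |β₁ k - β₂ k|) ^ 2 ≤ (∑ _k : Fin n, (1:ℝ)) * ∑ k, (β₁ k - β₂ k) ^ 2 := h
          _ = (n:ℝ) * ∑ k, (β₁ k - β₂ k) ^ 2 := by simp
      have h2 : ∑ k, |β₁ k - β₂ k| = Real.sqrt ((∑ k, |β₁ k - β₂ k|) ^ 2) :=
        (Real.sqrt_sq (by positivity)).symm
      rw [h2, hD, ← Real.sqrt_mul (by positivity) _]
      exact Real.sqrt_le_sqrt h1
    -- the log difference bound
    have hlog : |Real.log (∫ σ in overlapSet n N Q ε,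
          Real.exp (∑ k, β₁ k * ham N J (σ k)) ∂ spheres n N)
        - Real.log (∫ σ in overlapSet n N Q ε,
          Real.exp (∑ k, β₂ k * ham N J (σ k)) ∂ spheres n N)|
        ≤ (N:ℝ) * (6 * Real.sqrt n * D) := by
      refine log_int_diff (by positivity) (integrable_free n N β₁ J _)
        (integrable_free n N β₂ J _) ?_
      filter_upwards [ae_restrict_of_ae (ae_dot_one n N)] with σ hσ
      have hham : ∀ k, |ham N J (σ k)| ≤ 6 * (N:ℝ) := by
        intro k
        have hqfb : |qf J (σ k)| ≤ 2 * (3 * Real.sqrt N) * (∑ i, σ k i ^ 2) := hglob (σ k)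
        have hsum1 : ∑ i, σ k i ^ 2 = 1 := by
          have := hσ k
          rw [dot] at this
          rw [← this]
          exact Finset.sum_congr rfl fun i _ => sq (σ k i)
        rw [hsum1, mul_one] at hqfb
        have : ham N J (σ k) = Real.sqrt N * qf J (σ k) := rfl
        rw [this, abs_mul, abs_of_nonneg (Real.sqrt_nonneg _)]
        calc Real.sqrt N * |qf J (σ k)| ≤ Real.sqrt N * (2 * (3 * Real.sqrt N)) := by gcongr
          _ = 6 * (Real.sqrt N * Real.sqrt N) := by ring
          _ = 6 * (N:ℝ) := by rw [Real.mul_self_sqrt (Nat.cast_nonneg N)]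
      have hdiff : (∑ k, β₁ k * ham N J (σ k)) - (∑ k, β₂ k * ham N J (σ k))
          = ∑ k, (β₁ k - β₂ k) * ham N J (σ k) := by
        rw [← Finset.sum_sub_distrib]
        exact Finset.sum_congr rfl fun k _ => by ring
      rw [hdiff]
      calc |∑ k, (β₁ k - β₂ k) * ham N J (σ k)|
          ≤ ∑ k, |(β₁ k - β₂ k) * ham N J (σ k)| := Finset.abs_sum_le_sum_abs _ _
        _ ≤ ∑ k, |β₁ k - β₂ k| * (6 * (N:ℝ)) := by
            refine Finset.sum_le_sum fun k _ => ?_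
            rw [abs_mul]
            exact mul_le_mul_of_nonneg_left (hham k) (abs_nonneg _)
        _ = (∑ k, |β₁ k - β₂ k|) * (6 * (N:ℝ)) := by rw [← Finset.sum_mul]
        _ ≤ (Real.sqrt n * D) * (6 * (N:ℝ)) := by
            refine mul_le_mul_of_nonneg_right hCS (by positivity)
        _ = (N:ℝ) * (6 * Real.sqrt n * D) := by ring
    calc (1/(N:ℝ)) * |Real.log (∫ σ in overlapSet n N Q ε,
            Real.exp (∑ k, β₁ k * ham N J (σ k)) ∂ spheres n N)
          - Real.log (∫ σ in overlapSet n N Q ε,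
            Real.exp (∑ k, β₂ k * ham N J (σ k)) ∂ spheres n N)|
        ≤ (1/(N:ℝ)) * ((N:ℝ) * (6 * Real.sqrt n * D)) := by
          refine mul_le_mul_of_nonneg_left hlog (by positivity)
      _ = 6 * Real.sqrt n * D := by
          field_simp
  -- final squeeze
  refine tendsto_of_tendsto_of_tendsto_of_le_of_le' hkey tendsto_const_nhds ?_ ?_
  · filter_upwards [Filter.eventually_ge_atTop 1] with N hN
    exact measure_mono (hsub N hN)
  · exact Filter.Eventually.of_forall fun N => prob_le_one


end
end
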